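/- For every u ∈ C²(ℝ²) with compact support and every v ∈ C¹(ℝ²) with compact support, one has the integration-by-parts identity ∫_ℍ (Au) v 𝔴 dx dy = a(u,v), where the Heston bilinear form is taken over O = ℍ. -/

import Mathlib

open MeasureTheory Real Filter

noncomputable section

/-- The open upper half-plane ℍ ⊂ ℝ². -/
def UHP : Set (ℝ × ℝ) := {p : ℝ × ℝ | 0 < p.2}

/-- Partial derivative in the first (x) variable. -/
def pdX (u : ℝ × ℝ → ℝ) (p : ℝ × ℝ) : ℝ := fderiv ℝ u p (1, 0)

/-- Partial derivative in the second (y) variable. -/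
def pdY (u : ℝ × ℝ → ℝ) (p : ℝ × ℝ) : ℝ := fderiv ℝ u p (0, 1)

/-- The weight 𝔴(x,y) = y^(β−1) exp(−γ|x| − μ y). -/
def hw (β γ μ : ℝ) (p : ℝ × ℝ) : ℝ :=
  p.2 ^ (β - 1) * Real.exp (-γ * |p.1| - μ * p.2)

/-- The Heston operator A. -/
def hestonOp (σ ρ κ θ r q : ℝ) (u : ℝ × ℝ → ℝ) (p : ℝ × ℝ) : ℝ :=
  -(p.2 / 2) * (pdX (pdX u) p + 2 * ρ * σ * pdY (pdX u) p + σ ^ 2 * pdY (pdY u) p)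
    - (r - q - p.2 / 2) * pdX u p - κ * (θ - p.2) * pdY u p + r * u p

/-- The Heston bilinear form a(u,v) over a set O ⊆ ℍ (with β = 2κθ/σ², μ = 2κ/σ²,
a₁ = κρ/σ − 1/2, b₁ = r − q − κθρ/σ). -/
def hestonForm (σ ρ κ θ r q γ : ℝ) (O : Set (ℝ × ℝ)) (u v : ℝ × ℝ → ℝ) : ℝ :=
  1 / 2 * (∫ p in O,
      (pdX u p * pdX v p + ρ * σ * pdY u p * pdX v p + ρ * σ * pdX u p * pdY v p
          + σ ^ 2 * pdY u p * pdY v p) * p.2 * hw (2 * κ * θ / σ ^ 2) γ (2 * κ / σ ^ 2) p)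
    - γ / 2 * (∫ p in O,
      (pdX u p + ρ * σ * pdY u p) * v p * Real.sign p.1 * p.2
          * hw (2 * κ * θ / σ ^ 2) γ (2 * κ / σ ^ 2) p)
    - (∫ p in O,
      ((κ * ρ / σ - 1 / 2) * p.2 + (r - q - κ * θ * ρ / σ)) * pdX u p * v p
          * hw (2 * κ * θ / σ ^ 2) γ (2 * κ / σ ^ 2) p)
    + r * (∫ p in O, u p * v p * hw (2 * κ * θ / σ ^ 2) γ (2 * κ / σ ^ 2) p)

/-- The squared weighted Sobolev H¹(O,𝔴) norm:
‖u‖² = ∫_O ( y(u_x² + u_y²) + (1+y)u² ) 𝔴. -/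
def h1Sq (β γ μ : ℝ) (O : Set (ℝ × ℝ)) (u : ℝ × ℝ → ℝ) : ℝ :=
  ∫ p in O, (p.2 * ((pdX u p) ^ 2 + (pdY u p) ^ 2) + (1 + p.2) * (u p) ^ 2) * hw β γ μ p

/-! ### Auxiliary lemmas -/

section Aux

open Set

lemma UHP_eq_prod : UHP = (univ : Set ℝ) ×ˢ Ioi (0:ℝ) := by
  ext p; simp [UHP, Set.mem_prod]

lemma measurable_realSign : Measurable Real.sign := by
  unfold Real.sign
  exact Measurable.ite measurableSet_Iio measurable_const
    (Measurable.ite measurableSet_Ioi measurable_const measurable_const)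

lemma abs_realSign (x : ℝ) : |Real.sign x| ≤ 1 := by
  rcases Real.sign_apply_eq x with h | h | h <;> simp [h]

lemma contDiff_pdX {u : ℝ × ℝ → ℝ} {n : ℕ} (hu : ContDiff ℝ (n + 1) u) :
    ContDiff ℝ n (pdX u) := by
  have h : ContDiff ℝ n (fderiv ℝ u) := hu.fderiv_right (by norm_num)
  exact h.clm_apply contDiff_const

lemma contDiff_pdY {u : ℝ × ℝ → ℝ} {n : ℕ} (hu : ContDiff ℝ (n + 1) u) :
    ContDiff ℝ n (pdY u) := by
  have h : ContDiff ℝ n (fderiv ℝ u) := hu.fderiv_right (by norm_num)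
  exact h.clm_apply contDiff_const

lemma hcs_pdX {u : ℝ × ℝ → ℝ} (hu : HasCompactSupport u) : HasCompactSupport (pdX u) :=
  hu.fderiv_apply ℝ (1, 0)

lemma hcs_pdY {u : ℝ × ℝ → ℝ} (hu : HasCompactSupport u) : HasCompactSupport (pdY u) :=
  hu.fderiv_apply ℝ (0, 1)

lemma hasDerivAt_sliceX {f : ℝ × ℝ → ℝ} (hf : ContDiff ℝ 1 f) (x y : ℝ) :
    HasDerivAt (fun t => f (t, y)) (pdX f (x, y)) x := by
  have h := (hf.differentiable one_ne_zero (x, y)).hasFDerivAt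
  have hc : HasDerivAt (fun t : ℝ => (t, y)) ((1 : ℝ), (0 : ℝ)) x :=
    (hasDerivAt_id x).prodMk (hasDerivAt_const x y)
  exact h.comp_hasDerivAt x hc

lemma hasDerivAt_sliceY {f : ℝ × ℝ → ℝ} (hf : ContDiff ℝ 1 f) (x y : ℝ) :
    HasDerivAt (fun s => f (x, s)) (pdY f (x, y)) y := by
  have h := (hf.differentiable one_ne_zero (x, y)).hasFDerivAt
  have hc : HasDerivAt (fun s : ℝ => (x, s)) ((0 : ℝ), (1 : ℝ)) y :=
    (hasDerivAt_const y x).prodMk (hasDerivAt_id y)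
  exact h.comp_hasDerivAt y hc

lemma sliceCS_x {f : ℝ × ℝ → ℝ} (hf : HasCompactSupport f) (y : ℝ) :
    HasCompactSupport (fun t => f (t, y)) := by
  apply HasCompactSupport.intro (hf.image continuous_fst)
  intro t ht
  by_contra h
  exact ht ⟨(t, y), subset_tsupport f h, rfl⟩

lemma sliceCS_y {f : ℝ × ℝ → ℝ} (hf : HasCompactSupport f) (x : ℝ) :
    HasCompactSupport (fun s => f (x, s)) := by
  apply HasCompactSupport.intro (hf.image continuous_snd)
  intro s hs
  by_contra h
  exact hs ⟨(x, s), subset_tsupport f h, rfl⟩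

lemma pdXY_symm {u : ℝ × ℝ → ℝ} (hu : ContDiff ℝ 2 u) (p : ℝ × ℝ) :
    pdX (pdY u) p = pdY (pdX u) p := by
  have hsym := (hu.contDiffAt (x := p)).isSymmSndFDerivAt (by norm_num)
  have hd : DifferentiableAt ℝ (fderiv ℝ u) p :=
    ((hu.fderiv_right (m := 1) (by norm_num)).differentiable one_ne_zero) p
  have h1 : fderiv ℝ (pdY u) p (1, 0) = fderiv ℝ (fderiv ℝ u) p (1, 0) (0, 1) := by
    unfold pdY
    rw [fderiv_clm_apply hd (differentiableAt_const _)]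
    simp
  have h2 : fderiv ℝ (pdX u) p (0, 1) = fderiv ℝ (fderiv ℝ u) p (0, 1) (1, 0) := by
    unfold pdX
    rw [fderiv_clm_apply hd (differentiableAt_const _)]
    simp
  unfold pdX pdY
  rw [show (fun p => fderiv ℝ u p (0,1)) = pdY u from rfl]
  rw [show (fun p => fderiv ℝ u p (1,0)) = pdX u from rfl, h1, h2]
  exact hsym _ _

lemma eventually_zero_atTop_of_cs {g : ℝ → ℝ} (hgc : HasCompactSupport g) :
    ∀ᶠ x in atTop, g x = 0 := by
  rw [hasCompactSupport_iff_eventuallyEq, Filter.coclosedCompact_eq_cocompact] at hgc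
  exact hgc.filter_mono _root_.atTop_le_cocompact

lemma eventually_zero_atBot_of_cs {g : ℝ → ℝ} (hgc : HasCompactSupport g) :
    ∀ᶠ x in atBot, g x = 0 := by
  rw [hasCompactSupport_iff_eventuallyEq, Filter.coclosedCompact_eq_cocompact] at hgc
  exact hgc.filter_mono _root_.atBot_le_cocompact

lemma hcs_op2 {α : Type*} [TopologicalSpace α] [T2Space α] {f g : α → ℝ}
    (hf : HasCompactSupport f) (hg : HasCompactSupport g) (F : ℝ → ℝ → ℝ) (hF : F 0 0 = 0) :
    HasCompactSupport (fun x => F (f x) (g x)) := by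
  apply HasCompactSupport.intro (hf.union hg)
  intro x hx
  rw [Set.mem_union] at hx
  push_neg at hx
  rw [image_eq_zero_of_notMem_tsupport hx.1, image_eq_zero_of_notMem_tsupport hx.2, hF]

/-- support-union helper for three compactly supported functions -/
lemma hcs_triple {α : Type*} [TopologicalSpace α] [T2Space α] {f1 f2 f3 : α → ℝ}
    (h1 : HasCompactSupport f1) (h2 : HasCompactSupport f2) (h3 : HasCompactSupport f3)
    (g : α → ℝ) (hg : ∀ p, f1 p = 0 → f2 p = 0 → f3 p = 0 → g p = 0) :
    HasCompactSupport g := by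
  apply HasCompactSupport.intro ((h1.union h2).union h3)
  intro x hx
  simp only [Set.mem_union] at hx
  push_neg at hx
  exact hg x (image_eq_zero_of_notMem_tsupport hx.1.1)
    (image_eq_zero_of_notMem_tsupport hx.1.2) (image_eq_zero_of_notMem_tsupport hx.2)

/-- 1D integrability with weight `y^t e^{-μ y}` on `(0,∞)`. -/
lemma integrableOn_weighted_Ioi {c : ℝ → ℝ} (hc : Continuous c) (hcs : HasCompactSupport c)
    {t μ : ℝ} (ht : -1 < t) (hμ : 0 ≤ μ) :
    IntegrableOn (fun y => c y * (y ^ t * Real.exp (-μ * y))) (Ioi (0:ℝ)) := by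
  obtain ⟨x₀, hx₀⟩ := (hc.norm).exists_forall_ge_of_hasCompactSupport hcs.norm
  set M := ‖c x₀‖ with hM
  obtain ⟨R, hR0, hRs⟩ : ∃ R, 0 < R ∧ tsupport c ⊆ Metric.closedBall 0 R := by
    obtain ⟨R, hRs⟩ := hcs.isBounded.subset_closedBall 0
    exact ⟨max R 1, by positivity, hRs.trans (Metric.closedBall_subset_closedBall (le_max_left _ _))⟩
  have key : IntegrableOn (fun y => c y * (y ^ t * Real.exp (-μ * y))) (Ioc (0:ℝ) R) := by
    have hint : IntegrableOn (fun y : ℝ => M * y ^ t) (Ioc (0:ℝ) R) := by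
      have := (intervalIntegral.intervalIntegrable_rpow' (a := 0) (b := R) ht)
      rw [intervalIntegrable_iff_integrableOn_Ioc_of_le hR0.le] at this
      exact this.const_mul M
    apply Integrable.mono' hint
    · apply ContinuousOn.aestronglyMeasurable _ measurableSet_Ioc
      apply hc.continuousOn.mul
      apply ContinuousOn.mul _ (Real.continuous_exp.comp
        (continuous_const.mul continuous_id)).continuousOn
      exact fun y hy => (Real.continuousAt_rpow_const y t (Or.inl hy.1.ne')).continuousWithinAt
    · filter_upwards [ae_restrict_mem measurableSet_Ioc] with y hy
      have hy0 : 0 < y := hy.1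
      have h1 : |c y| ≤ M := hx₀ y
      have h2 : Real.exp (-μ * y) ≤ 1 := by
        apply Real.exp_le_one_iff.2; nlinarith
      have h3 : (0:ℝ) ≤ y ^ t := Real.rpow_nonneg hy0.le t
      calc ‖c y * (y ^ t * Real.exp (-μ * y))‖
          = |c y| * (y ^ t * Real.exp (-μ * y)) := by
            rw [Real.norm_eq_abs, abs_mul]
            congr 1
            rw [abs_of_nonneg (by positivity)]
        _ ≤ M * (y ^ t * 1) := by
            apply mul_le_mul h1 _ (by positivity) (by positivity)
            exact mul_le_mul_of_nonneg_left h2 h3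
        _ = M * y ^ t := by ring
  have hzero : IntegrableOn (fun y => c y * (y ^ t * Real.exp (-μ * y))) (Ioi R) := by
    apply IntegrableOn.congr_fun (integrableOn_zero (s := Ioi R))
    · intro y hy
      have : c y = 0 := by
        by_contra h
        have := hRs (subset_tsupport c h)
        simp only [Metric.mem_closedBall, Real.dist_eq, sub_zero] at this
        have : y ≤ R := le_trans (le_abs_self y) this
        exact absurd this (not_le.2 hy)
      simp [this]
    · exact measurableSet_Ioi
  have hsub : Ioi (0:ℝ) ⊆ Ioc 0 R ∪ Ioi R := by
    intro y hy
    rcases le_or_gt y R with h | h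
    · exact Or.inl ⟨hy, h⟩
    · exact Or.inr h
  exact (key.union hzero).mono_set hsub

/-- IBP in the x-direction with weight `e^{-γ|x|}`. -/
lemma integral_ibp_x {γ : ℝ} (hγ : 0 < γ) (g g' : ℝ → ℝ)
    (hg : ∀ x, HasDerivAt g (g' x) x) (hg'c : Continuous g')
    (hgc : HasCompactSupport g) :
    ∫ x, (g' x - γ * Real.sign x * g x) * Real.exp (-γ * |x|) = 0 := by
  have hgcont : Continuous g := by
    rw [continuous_iff_continuousAt]; exact fun x => (hg x).continuousAt
  have hg'eq : g' = deriv g := funext fun x => ((hg x).deriv).symm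
  have hg'cs : HasCompactSupport g' := hg'eq ▸ hgc.deriv
  have hpos : ∫ x in Ioi (0:ℝ), (g' x - γ * Real.sign x * g x) * Real.exp (-γ * |x|)
      = - g 0 := by
    have heq : ∀ x ∈ Ioi (0:ℝ), (g' x - γ * Real.sign x * g x) * Real.exp (-γ * |x|)
        = (g' x - γ * g x) * Real.exp (-γ * x) := by
      intro x hx
      rw [Real.sign_of_pos hx, abs_of_pos hx, mul_one]
    rw [setIntegral_congr_fun measurableSet_Ioi heq]
    have hderiv : ∀ x ∈ Ioi (0:ℝ),
        HasDerivAt (fun x => g x * Real.exp (-γ * x))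
          ((g' x - γ * g x) * Real.exp (-γ * x)) x := by
      intro x _
      have h1 : HasDerivAt (fun x : ℝ => Real.exp (-γ * x)) (-γ * Real.exp (-γ * x)) x := by
        simpa [mul_comm] using ((hasDerivAt_id x).const_mul (-γ)).exp
      have := (hg x).fun_mul h1
      exact this.congr_deriv (by ring)
    have hint : IntegrableOn (fun x => (g' x - γ * g x) * Real.exp (-γ * x)) (Ioi 0) := by
      have hcont : Continuous fun x => (g' x - γ * g x) * Real.exp (-γ * x) :=
        (hg'c.sub (continuous_const.mul hgcont)).mul
          (Real.continuous_exp.comp (continuous_const.mul continuous_id))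
      have hcs2 : HasCompactSupport fun x => (g' x - γ * g x) * Real.exp (-γ * x) :=
        (hcs_op2 hg'cs hgc (fun a b => a - γ * b) (by ring)).mul_right
      exact (hcont.integrable_of_hasCompactSupport hcs2).integrableOn
    have htend : Tendsto (fun x => g x * Real.exp (-γ * x)) atTop (nhds 0) := by
      apply Tendsto.congr' _ tendsto_const_nhds
      filter_upwards [eventually_zero_atTop_of_cs hgc] with x hx
      simp [hx]
    rw [integral_Ioi_of_hasDerivAt_of_tendsto
      ((hgcont.mul (Real.continuous_exp.comp
        (continuous_const.mul continuous_id))).continuousAt.continuousWithinAt)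
      hderiv hint htend]
    simp
  have hneg : ∫ x in Iic (0:ℝ), (g' x - γ * Real.sign x * g x) * Real.exp (-γ * |x|)
      = g 0 := by
    have hae : ∀ᵐ x : ℝ, x ∈ Iic (0:ℝ) →
        (g' x - γ * Real.sign x * g x) * Real.exp (-γ * |x|)
        = (g' x + γ * g x) * Real.exp (γ * x) := by
      have h0 : ∀ᵐ x : ℝ, x ≠ 0 := by
        refine ae_iff.2 ?_
        have : {a : ℝ | ¬a ≠ 0} = {(0:ℝ)} := by ext x; simp
        rw [this]
        exact measure_singleton 0
      filter_upwards [h0] with x hx0 hx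
      have hxneg : x < 0 := lt_of_le_of_ne hx hx0
      rw [Real.sign_of_neg hxneg, abs_of_neg hxneg]
      ring_nf
    rw [setIntegral_congr_ae measurableSet_Iic hae]
    have hderiv : ∀ x ∈ Iio (0:ℝ),
        HasDerivAt (fun x => g x * Real.exp (γ * x))
          ((g' x + γ * g x) * Real.exp (γ * x)) x := by
      intro x _
      have h1 : HasDerivAt (fun x : ℝ => Real.exp (γ * x)) (γ * Real.exp (γ * x)) x := by
        simpa [mul_comm] using ((hasDerivAt_id x).const_mul γ).exp
      have := (hg x).fun_mul h1
      exact this.congr_deriv (by ring)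
    have hint : IntegrableOn (fun x => (g' x + γ * g x) * Real.exp (γ * x)) (Iic 0) := by
      have hcont : Continuous fun x => (g' x + γ * g x) * Real.exp (γ * x) :=
        (hg'c.add (continuous_const.mul hgcont)).mul
          (Real.continuous_exp.comp (continuous_const.mul continuous_id))
      have hcs2 : HasCompactSupport fun x => (g' x + γ * g x) * Real.exp (γ * x) :=
        (hcs_op2 hg'cs hgc (fun a b => a + γ * b) (by ring)).mul_right
      exact (hcont.integrable_of_hasCompactSupport hcs2).integrableOn
    have htend : Tendsto (fun x => g x * Real.exp (γ * x)) atBot (nhds 0) := by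
      apply Tendsto.congr' _ tendsto_const_nhds
      filter_upwards [eventually_zero_atBot_of_cs hgc] with x hx
      simp [hx]
    rw [integral_Iic_of_hasDerivAt_of_tendsto
      ((hgcont.mul (Real.continuous_exp.comp
        (continuous_const.mul continuous_id))).continuousAt.continuousWithinAt)
      hderiv hint htend]
    simp
  have hintall : Integrable (fun x => (g' x - γ * Real.sign x * g x) * Real.exp (-γ * |x|)) := by
    have hdom : Integrable (fun x => (|g' x| + γ * |g x|) * Real.exp (-γ * |x|)) := by
      have hcont : Continuous fun x => (|g' x| + γ * |g x|) * Real.exp (-γ * |x|) :=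
        (hg'c.abs.add (continuous_const.mul hgcont.abs)).mul
          (Real.continuous_exp.comp ((continuous_const.mul continuous_abs)))
      have hcs2 : HasCompactSupport fun x => (|g' x| + γ * |g x|) * Real.exp (-γ * |x|) :=
        (hcs_op2 hg'cs hgc (fun a b => |a| + γ * |b|) (by simp)).mul_right
      exact hcont.integrable_of_hasCompactSupport hcs2
    apply hdom.mono'
    · apply AEStronglyMeasurable.mul _ (Real.continuous_exp.comp
        (continuous_const.mul continuous_abs)).aestronglyMeasurable
      apply AEStronglyMeasurable.sub hg'c.aestronglyMeasurable
      exact ((measurable_const.mul measurable_realSign).mul hgcont.measurable).aestronglyMeasurable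
    · refine ae_of_all _ fun x => ?_
      rw [Real.norm_eq_abs, abs_mul, abs_of_nonneg (Real.exp_pos _).le]
      apply mul_le_mul_of_nonneg_right _ (Real.exp_pos _).le
      have hs : |Real.sign x| ≤ 1 := abs_realSign x
      calc |g' x - γ * Real.sign x * g x| ≤ |g' x| + |γ * Real.sign x * g x| :=
            abs_sub _ _
        _ ≤ |g' x| + γ * |g x| := by
            rw [abs_mul, abs_mul, abs_of_pos hγ, mul_assoc]
            refine add_le_add_right (mul_le_mul_of_nonneg_left ?_ hγ.le) _
            calc |Real.sign x| * |g x| ≤ 1 * |g x| :=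
                  mul_le_mul_of_nonneg_right hs (abs_nonneg _)
              _ = |g x| := one_mul _
  rw [← intervalIntegral.integral_Iic_add_Ioi (hintall.integrableOn) (hintall.integrableOn),
    hpos, hneg]
  ring

/-- IBP in the y-direction with weight `y^{β-1} e^{-μ y}` on `(0,∞)`. -/
lemma integral_ibp_y {β μ : ℝ} (hβ : 0 < β) (hμ : 0 ≤ μ) (g g' : ℝ → ℝ)
    (hg : ∀ y, HasDerivAt g (g' y) y) (hg'c : Continuous g')
    (hgc : HasCompactSupport g) :
    ∫ y in Ioi (0:ℝ), (g' y * y + g y * (β - μ * y)) * (y ^ (β - 1) * Real.exp (-μ * y)) = 0 := by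
  have hgcont : Continuous g := by
    rw [continuous_iff_continuousAt]; exact fun x => (hg x).continuousAt
  have hg'eq : g' = deriv g := funext fun x => ((hg x).deriv).symm
  have hg'cs : HasCompactSupport g' := hg'eq ▸ hgc.deriv
  set G : ℝ → ℝ := fun y => g y * (y ^ β * Real.exp (-μ * y)) with hG
  have hcont0 : ContinuousWithinAt G (Ici 0) 0 := by
    apply ContinuousWithinAt.mul (hgcont.continuousAt.continuousWithinAt)
    apply ContinuousWithinAt.mul
    · exact (Real.continuousAt_rpow_const 0 β (Or.inr hβ.le)).continuousWithinAt
    · exact (Real.continuous_exp.comp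
        (continuous_const.mul continuous_id)).continuousAt.continuousWithinAt
  have hderiv : ∀ y ∈ Ioi (0:ℝ), HasDerivAt G
      ((g' y * y + g y * (β - μ * y)) * (y ^ (β - 1) * Real.exp (-μ * y))) y := by
    intro y hy
    have hy0 : 0 < y := hy
    have h1 : HasDerivAt (fun y : ℝ => y ^ β) (β * y ^ (β - 1)) y :=
      Real.hasDerivAt_rpow_const (Or.inl hy0.ne')
    have h2 : HasDerivAt (fun y : ℝ => Real.exp (-μ * y)) (-μ * Real.exp (-μ * y)) y := by
      simpa [mul_comm] using ((hasDerivAt_id y).const_mul (-μ)).exp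
    have h3 := (hg y).fun_mul (h1.fun_mul h2)
    refine h3.congr_deriv ?_
    have hsplit : y ^ β = y ^ (β - 1) * y := by
      rw [← Real.rpow_add_one hy0.ne' (β - 1)]
      ring_nf
    rw [hsplit]
    ring
  have hint : IntegrableOn
      (fun y => (g' y * y + g y * (β - μ * y)) * (y ^ (β - 1) * Real.exp (-μ * y))) (Ioi 0) := by
    apply integrableOn_weighted_Ioi _ _ (by linarith) hμ
    · exact (hg'c.mul continuous_id).add (hgcont.mul (continuous_const.sub
        (continuous_const.mul continuous_id)))
    · apply HasCompactSupport.intro (hg'cs.union hgc)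
      intro y hy
      rw [Set.mem_union] at hy
      push_neg at hy
      rw [image_eq_zero_of_notMem_tsupport hy.1, image_eq_zero_of_notMem_tsupport hy.2]
      ring
  have htend : Tendsto G atTop (nhds 0) := by
    apply Tendsto.congr' _ tendsto_const_nhds
    filter_upwards [eventually_zero_atTop_of_cs hgc] with y hy
    simp [hG, hy]
  have := integral_Ioi_of_hasDerivAt_of_tendsto hcont0 hderiv hint htend
  rw [this, hG]
  simp [Real.zero_rpow hβ.ne']

lemma restrict_eq_prod :
    (volume : Measure (ℝ × ℝ)).restrict (univ ×ˢ Ioi (0:ℝ))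
      = (volume : Measure ℝ).prod ((volume : Measure ℝ).restrict (Ioi 0)) := by
  rw [Measure.volume_eq_prod, ← Measure.prod_restrict, Measure.restrict_univ]

lemma hw_contOn {β γ μ : ℝ} : ContinuousOn (hw β γ μ) ((univ : Set ℝ) ×ˢ Ioi (0:ℝ)) := by
  intro p hp
  have h2 : (0:ℝ) < p.2 := hp.2
  apply ContinuousWithinAt.mul
  · exact ((Real.continuousAt_rpow_const p.2 (β - 1) (Or.inl h2.ne')).comp
      continuousAt_snd).continuousWithinAt
  · exact (Real.continuous_exp.comp
      (((continuous_const.mul (continuous_abs.comp continuous_fst)).sub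
      (continuous_const.mul continuous_snd)))).continuousAt.continuousWithinAt

lemma hw_nonneg {β γ μ : ℝ} {p : ℝ × ℝ} (hp : 0 < p.2) : 0 ≤ hw β γ μ p :=
  mul_nonneg (Real.rpow_nonneg hp.le _) (Real.exp_pos _).le

/-- Master integrability lemma over the upper half-plane. -/
lemma integrable_weighted {β γ μ : ℝ} (hβ : 0 < β) (hγ : 0 < γ) (hμ : 0 ≤ μ)
    {c : ℝ × ℝ → ℝ} (hc : Continuous c) (hcs : HasCompactSupport c)
    {b : ℝ × ℝ → ℝ} (hb : Measurable b) (hb1 : ∀ p, |b p| ≤ 1) :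
    Integrable (fun p => b p * (c p * hw β γ μ p))
      ((volume : Measure (ℝ × ℝ)).restrict ((univ : Set ℝ) ×ˢ Ioi (0:ℝ))) := by
  have hSm : MeasurableSet ((univ : Set ℝ) ×ˢ Ioi (0:ℝ)) :=
    (MeasurableSet.univ (α := ℝ)).prod (measurableSet_Ioi (a := (0:ℝ)))
  obtain ⟨x₀, hx₀⟩ := (hc.norm).exists_forall_ge_of_hasCompactSupport hcs.norm
  set M := ‖c x₀‖ with hM
  have hM0 : 0 ≤ M := le_trans (norm_nonneg _) (hx₀ x₀)
  obtain ⟨R, hR1, hRs⟩ : ∃ R, 1 ≤ R ∧ tsupport c ⊆ Metric.closedBall 0 R := by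
    obtain ⟨R, hRs⟩ := hcs.isBounded.subset_closedBall 0
    exact ⟨max R 1, le_max_right _ _,
      hRs.trans (Metric.closedBall_subset_closedBall (le_max_left _ _))⟩
  set g : ℝ × ℝ → ℝ := fun p => (Icc (-R) R).indicator (fun _ => M) p.1
      * (Ioc (0:ℝ) R).indicator (fun y => y ^ (β - 1)) p.2 with hg
  have hgint : Integrable g
      ((volume : Measure (ℝ × ℝ)).restrict ((univ : Set ℝ) ×ˢ Ioi (0:ℝ))) := by
    rw [restrict_eq_prod]
    apply Integrable.mul_prod
    · exact (integrable_indicator_iff measurableSet_Icc).2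
        (integrableOn_const measure_Icc_lt_top.ne)
    · rw [integrable_indicator_iff measurableSet_Ioc]
      unfold IntegrableOn
      rw [Measure.restrict_restrict measurableSet_Ioc,
        inter_eq_left.2 (fun y hy => hy.1)]
      have := (intervalIntegral.intervalIntegrable_rpow' (a := 0) (b := R)
        (by linarith : (-1:ℝ) < β - 1))
      rw [intervalIntegrable_iff_integrableOn_Ioc_of_le (by linarith)] at this
      exact this
  apply hgint.mono'
  · apply AEStronglyMeasurable.mul hb.aestronglyMeasurable
    exact (hc.continuousOn.mul hw_contOn).aestronglyMeasurable hSm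
  · rw [ae_restrict_iff' hSm]
    refine ae_of_all _ fun p hp => ?_
    have hy : (0:ℝ) < p.2 := hp.2
    by_cases hcp : c p = 0
    · rw [hcp]
      simp only [mul_zero, zero_mul, norm_zero]
      apply mul_nonneg
      · exact Set.indicator_nonneg (fun _ _ => hM0) _
      · exact Set.indicator_nonneg (fun y hy => Real.rpow_nonneg hy.1.le _) _
    · have hmem : p ∈ Metric.closedBall (0 : ℝ × ℝ) R := hRs (subset_tsupport c hcp)
      rw [Metric.mem_closedBall, dist_zero_right, Prod.norm_def] at hmem
      have h1 : |p.1| ≤ R := le_trans (le_max_left _ _) hmem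
      have h2 : p.2 ≤ R := le_trans (le_abs_self _)
        (le_trans (le_max_right ‖p.1‖ _) hmem)
      have hg1 : (Icc (-R) R).indicator (fun _ => M) p.1 = M := by
        rw [abs_le] at h1
        rw [Set.indicator_of_mem (Set.mem_Icc.2 ⟨h1.1, h1.2⟩)]
      have hg2 : (Ioc (0:ℝ) R).indicator (fun y => y ^ (β - 1)) p.2 = p.2 ^ (β - 1) := by
        rw [Set.indicator_of_mem (Set.mem_Ioc.2 ⟨hy, h2⟩)]
      have hexp : Real.exp (-γ * |p.1| - μ * p.2) ≤ 1 := by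
        apply Real.exp_le_one_iff.2
        have : 0 ≤ γ * |p.1| := mul_nonneg hγ.le (abs_nonneg _)
        nlinarith
      simp only [g]
      rw [hg1, hg2]
      calc ‖b p * (c p * hw β γ μ p)‖ = |b p| * (|c p| * |hw β γ μ p|) := by
            rw [Real.norm_eq_abs, abs_mul, abs_mul]
        _ ≤ 1 * (M * (p.2 ^ (β - 1) * Real.exp (-γ * |p.1| - μ * p.2))) := by
            apply mul_le_mul (hb1 p) _ (by positivity) zero_le_one
            apply mul_le_mul (hx₀ p) _ (abs_nonneg _) hM0
            rw [abs_of_nonneg (hw_nonneg hy)]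
            exact le_refl _
        _ ≤ M * p.2 ^ (β - 1) := by
            rw [one_mul]
            have h3 : (0:ℝ) ≤ p.2 ^ (β - 1) := Real.rpow_nonneg hy.le _
            calc M * (p.2 ^ (β - 1) * Real.exp (-γ * |p.1| - μ * p.2))
                ≤ M * (p.2 ^ (β - 1) * 1) :=
                  mul_le_mul_of_nonneg_left (mul_le_mul_of_nonneg_left hexp h3) hM0
              _ = M * p.2 ^ (β - 1) := by ring

/-- vanishing of the x-divergence term. -/
lemma integral_divX_zero {β γ μ : ℝ} (hγ : 0 < γ) (c₁ c₁x : ℝ × ℝ → ℝ)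
    (hd : ∀ x y : ℝ, HasDerivAt (fun t => c₁ (t, y)) (c₁x (x, y)) x)
    (hc₁x : Continuous c₁x) (hcs : HasCompactSupport c₁)
    (hint : Integrable (fun p => (c₁x p - γ * Real.sign p.1 * c₁ p) * hw β γ μ p)
      ((volume : Measure (ℝ × ℝ)).restrict ((univ : Set ℝ) ×ˢ Ioi (0:ℝ)))) :
    ∫ p in (univ : Set ℝ) ×ˢ Ioi (0:ℝ),
      (c₁x p - γ * Real.sign p.1 * c₁ p) * hw β γ μ p = 0 := by
  rw [restrict_eq_prod] at hint ⊢
  rw [MeasureTheory.integral_prod_symm _ hint]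
  have hin : ∀ y : ℝ,
      (∫ x, (c₁x (x, y) - γ * Real.sign x * c₁ (x, y)) * hw β γ μ (x, y)) = 0 := by
    intro y
    have hsplit : ∀ x : ℝ, hw β γ μ (x, y)
        = Real.exp (-γ * |x|) * (y ^ (β - 1) * Real.exp (-(μ * y))) := by
      intro x
      show y ^ (β - 1) * Real.exp (-γ * |x| - μ * y)
          = Real.exp (-γ * |x|) * (y ^ (β - 1) * Real.exp (-(μ * y)))
      rw [show -γ * |x| - μ * y = -γ * |x| + -(μ * y) from by ring, Real.exp_add]
      ring

    have heq : (fun x => (c₁x (x, y) - γ * Real.sign x * c₁ (x, y)) * hw β γ μ (x, y))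
        = fun x => ((c₁x (x, y) - γ * Real.sign x * c₁ (x, y)) * Real.exp (-γ * |x|))
            * (y ^ (β - 1) * Real.exp (-(μ * y))) := by
      funext x
      rw [hsplit x]
      ring
    rw [heq, MeasureTheory.integral_mul_const]
    have h0 := integral_ibp_x hγ (fun t => c₁ (t, y)) (fun t => c₁x (t, y))
      (fun x => hd x y) (hc₁x.comp (continuous_id.prodMk continuous_const))
      (sliceCS_x hcs y)
    rw [h0, zero_mul]
  simp only [hin, integral_zero]

/-- vanishing of the y-divergence term. -/
lemma integral_divY_zero {β γ μ : ℝ} (hβ : 0 < β) (hμ : 0 ≤ μ) (c₂ c₂y : ℝ × ℝ → ℝ)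
    (hd : ∀ x y : ℝ, HasDerivAt (fun s => c₂ (x, s)) (c₂y (x, y)) y)
    (hc₂y : Continuous c₂y) (hcs : HasCompactSupport c₂)
    (hint : Integrable (fun p => (c₂y p * p.2 + c₂ p * (β - μ * p.2)) * hw β γ μ p)
      ((volume : Measure (ℝ × ℝ)).restrict ((univ : Set ℝ) ×ˢ Ioi (0:ℝ)))) :
    ∫ p in (univ : Set ℝ) ×ˢ Ioi (0:ℝ),
      (c₂y p * p.2 + c₂ p * (β - μ * p.2)) * hw β γ μ p = 0 := by
  rw [restrict_eq_prod] at hint ⊢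
  rw [MeasureTheory.integral_prod _ hint]
  have hin : ∀ x : ℝ,
      (∫ y in Ioi (0:ℝ), (c₂y (x, y) * y + c₂ (x, y) * (β - μ * y)) * hw β γ μ (x, y)) = 0 := by
    intro x
    have hsplit : ∀ y : ℝ, hw β γ μ (x, y)
        = (y ^ (β - 1) * Real.exp (-μ * y)) * Real.exp (-γ * |x|) := by
      intro y
      show y ^ (β - 1) * Real.exp (-γ * |x| - μ * y)
          = (y ^ (β - 1) * Real.exp (-μ * y)) * Real.exp (-γ * |x|)
      rw [show -γ * |x| - μ * y = -μ * y + -γ * |x| from by ring, Real.exp_add]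
      ring
    have heq : (fun y => (c₂y (x, y) * y + c₂ (x, y) * (β - μ * y)) * hw β γ μ (x, y))
        = fun y => ((c₂y (x, y) * y + c₂ (x, y) * (β - μ * y))
            * (y ^ (β - 1) * Real.exp (-μ * y))) * Real.exp (-γ * |x|) := by
      funext y
      rw [hsplit y]
      ring
    rw [heq, MeasureTheory.integral_mul_const]
    have h0 := integral_ibp_y hβ hμ (fun s => c₂ (x, s)) (fun s => c₂y (x, s))
      (fun y => hd x y) (hc₂y.comp (continuous_const.prodMk continuous_id))
      (sliceCS_y hcs x)
    rw [h0, zero_mul]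
  simp only [hin, integral_zero]

end Aux

/-- integration by parts for the Heston operator over ℍ. -/
theorem stmt4 (σ ρ κ θ r q : ℝ) (hσ : σ ≠ 0) (hρ₁ : -1 < ρ) (hρ₂ : ρ < 1)
    (hκ : 0 < κ) (hθ : 0 < θ) (hr : 0 ≤ r) (hq : 0 ≤ q)
    (γ : ℝ) (hγ : 0 < γ)
    (u v : ℝ × ℝ → ℝ) (hu : ContDiff ℝ 2 u) (hucs : HasCompactSupport u)
    (hv : ContDiff ℝ 1 v) (hvcs : HasCompactSupport v) :
    ∫ p in UHP, hestonOp σ ρ κ θ r q u p * v p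
        * hw (2 * κ * θ / σ ^ 2) γ (2 * κ / σ ^ 2) p
      = hestonForm σ ρ κ θ r q γ UHP u v := by
  have hσ2 : σ ^ 2 ≠ 0 := pow_ne_zero 2 hσ
  have hβpos : (0:ℝ) < 2 * κ * θ / σ ^ 2 := by positivity
  have hμ0 : (0:ℝ) ≤ 2 * κ / σ ^ 2 := by positivity
  unfold hestonForm
  rw [UHP_eq_prod]
  set β : ℝ := 2 * κ * θ / σ ^ 2 with hβdef
  set μ : ℝ := 2 * κ / σ ^ 2 with hμdef
  -- smoothness facts
  have hpdXu : ContDiff ℝ 1 (pdX u) := contDiff_pdX (n := 1) hu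
  have hpdYu : ContDiff ℝ 1 (pdY u) := contDiff_pdY (n := 1) hu
  have hcXu : Continuous (pdX u) := hpdXu.continuous
  have hcYu : Continuous (pdY u) := hpdYu.continuous
  have hcXXu : Continuous (pdX (pdX u)) := (contDiff_pdX (n := 0) hpdXu).continuous
  have hcXYu : Continuous (pdX (pdY u)) := (contDiff_pdX (n := 0) hpdYu).continuous
  have hcYXu : Continuous (pdY (pdX u)) := (contDiff_pdY (n := 0) hpdXu).continuous
  have hcYYu : Continuous (pdY (pdY u)) := (contDiff_pdY (n := 0) hpdYu).continuous
  have hcu : Continuous u := hu.continuous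
  have hcv : Continuous v := hv.continuous
  have hcXv : Continuous (pdX v) := (contDiff_pdX (n := 0) hv).continuous
  have hcYv : Continuous (pdY v) := (contDiff_pdY (n := 0) hv).continuous
  have hcsXv : HasCompactSupport (pdX v) := hcs_pdX hvcs
  have hcsYv : HasCompactSupport (pdY v) := hcs_pdY hvcs
  -- the divergence-field components
  set C1 : ℝ × ℝ → ℝ := fun p => -(1/2) * (pdX u p + ρ * σ * pdY u p) * p.2 * v p with hC1
  set C1x : ℝ × ℝ → ℝ := fun p =>
      -(1/2) * (pdX (pdX u) p + ρ * σ * pdX (pdY u) p) * p.2 * v p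
      + -(1/2) * (pdX u p + ρ * σ * pdY u p) * p.2 * pdX v p with hC1x
  set C2 : ℝ × ℝ → ℝ := fun p => -(1/2) * (ρ * σ * pdX u p + σ ^ 2 * pdY u p) * v p with hC2
  set C2y : ℝ × ℝ → ℝ := fun p =>
      -(1/2) * (ρ * σ * pdY (pdX u) p + σ ^ 2 * pdY (pdY u) p) * v p
      + -(1/2) * (ρ * σ * pdX u p + σ ^ 2 * pdY u p) * pdY v p with hC2y
  have hd1 : ∀ x y : ℝ, HasDerivAt (fun t => C1 (t, y)) (C1x (x, y)) x := by
    intro x y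
    have hA := hasDerivAt_sliceX hpdXu x y
    have hB := hasDerivAt_sliceX hpdYu x y
    have hV := hasDerivAt_sliceX hv x y
    have h := (((hA.add (hB.const_mul (ρ * σ))).const_mul (-(1/2))).mul_const y).mul hV
    simp only [hC1, hC1x]
    exact h
  have hd2 : ∀ x y : ℝ, HasDerivAt (fun s => C2 (x, s)) (C2y (x, y)) y := by
    intro x y
    have hA := hasDerivAt_sliceY hpdXu x y
    have hB := hasDerivAt_sliceY hpdYu x y
    have hV := hasDerivAt_sliceY hv x y
    have h := (((hA.const_mul (ρ * σ)).add (hB.const_mul (σ ^ 2))).const_mul (-(1/2))).mul hV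
    simp only [hC2, hC2y]
    exact h
  have hcC1 : Continuous C1 := by
    rw [hC1]
    exact ((continuous_const.mul (hcXu.add (continuous_const.mul hcYu))).mul
      continuous_snd).mul hcv
  have hcC1x : Continuous C1x := by
    rw [hC1x]
    exact (((continuous_const.mul (hcXXu.add (continuous_const.mul hcXYu))).mul
      continuous_snd).mul hcv).add
      (((continuous_const.mul (hcXu.add (continuous_const.mul hcYu))).mul
      continuous_snd).mul hcXv)
  have hcC2 : Continuous C2 := by
    rw [hC2]
    exact (continuous_const.mul ((continuous_const.mul hcXu).add
      (continuous_const.mul hcYu))).mul hcv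
  have hcC2y : Continuous C2y := by
    rw [hC2y]
    exact ((continuous_const.mul ((continuous_const.mul hcYXu).add
      (continuous_const.mul hcYYu))).mul hcv).add
      ((continuous_const.mul ((continuous_const.mul hcXu).add
      (continuous_const.mul hcYu))).mul hcYv)
  have hcsC1 : HasCompactSupport C1 := by
    apply hcs_triple hvcs hcsXv hcsYv
    intro p h1 h2 h3
    simp only [hC1]
    rw [h1]
    ring
  have hcsC1x : HasCompactSupport C1x := by
    apply hcs_triple hvcs hcsXv hcsYv
    intro p h1 h2 h3
    simp only [hC1x]
    rw [h1, h2]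
    ring
  have hcsC2 : HasCompactSupport C2 := by
    apply hcs_triple hvcs hcsXv hcsYv
    intro p h1 h2 h3
    simp only [hC2]
    rw [h1]
    ring
  have hcsC2y : HasCompactSupport C2y := by
    apply hcs_triple hvcs hcsXv hcsYv
    intro p h1 h2 h3
    simp only [hC2y]
    rw [h1, h3]
    ring
  -- integrability of all integrands
  have hb1 : Measurable (fun _ : ℝ × ℝ => (1:ℝ)) := measurable_const
  have hb1' : ∀ p : ℝ × ℝ, |(fun _ : ℝ × ℝ => (1:ℝ)) p| ≤ 1 := fun p => by norm_num
  have hbs : Measurable (fun p : ℝ × ℝ => Real.sign p.1) :=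
    measurable_realSign.comp measurable_fst
  have hbs' : ∀ p : ℝ × ℝ, |(fun p : ℝ × ℝ => Real.sign p.1) p| ≤ 1 :=
    fun p => abs_realSign _
  have hcOp : Continuous (fun p => hestonOp σ ρ κ θ r q u p * v p) := by
    apply Continuous.mul _ hcv
    unfold hestonOp
    have h₁ : Continuous fun p : ℝ × ℝ => -(p.2 / 2)
        * (pdX (pdX u) p + 2 * ρ * σ * pdY (pdX u) p + σ ^ 2 * pdY (pdY u) p) :=
      ((continuous_snd.div_const 2).neg).mul ((hcXXu.add
        (continuous_const.mul hcYXu)).add (continuous_const.mul hcYYu))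
    have h₂ : Continuous fun p : ℝ × ℝ => (r - q - p.2 / 2) * pdX u p :=
      (continuous_const.sub (continuous_snd.div_const 2)).mul hcXu
    have h₃ : Continuous fun p : ℝ × ℝ => κ * (θ - p.2) * pdY u p :=
      (continuous_const.mul (continuous_const.sub continuous_snd)).mul hcYu
    have h₄ : Continuous fun p : ℝ × ℝ => r * u p := continuous_const.mul hcu
    exact ((h₁.sub h₂).sub h₃).add h₄
  have hcsOp : HasCompactSupport (fun p => hestonOp σ ρ κ θ r q u p * v p) :=
    hvcs.mul_left
  have hInt0 : Integrable (fun p => hestonOp σ ρ κ θ r q u p * v p * hw β γ μ p)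
      ((volume : Measure (ℝ × ℝ)).restrict ((Set.univ : Set ℝ) ×ˢ Set.Ioi (0:ℝ))) := by
    have := integrable_weighted hβpos hγ hμ0 hcOp hcsOp hb1 hb1'
    refine this.congr (ae_of_all _ fun p => ?_)
    ring
  have hInt1 : Integrable (fun p => (pdX u p * pdX v p + ρ * σ * pdY u p * pdX v p
      + ρ * σ * pdX u p * pdY v p + σ ^ 2 * pdY u p * pdY v p) * p.2 * hw β γ μ p)
      ((volume : Measure (ℝ × ℝ)).restrict ((Set.univ : Set ℝ) ×ˢ Set.Ioi (0:ℝ))) := by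
    have hc : Continuous (fun p : ℝ × ℝ => (pdX u p * pdX v p + ρ * σ * pdY u p * pdX v p
        + ρ * σ * pdX u p * pdY v p + σ ^ 2 * pdY u p * pdY v p) * p.2) := by
      apply Continuous.mul _ continuous_snd
      exact (((hcXu.mul hcXv).add (((continuous_const.mul hcYu)).mul hcXv)).add
        ((continuous_const.mul hcXu).mul hcYv)).add ((continuous_const.mul hcYu).mul hcYv)
    have hcs : HasCompactSupport (fun p : ℝ × ℝ => (pdX u p * pdX v p
        + ρ * σ * pdY u p * pdX v p + ρ * σ * pdX u p * pdY v p
        + σ ^ 2 * pdY u p * pdY v p) * p.2) := by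
      apply hcs_triple hvcs hcsXv hcsYv
      intro p h1 h2 h3
      rw [h2, h3]
      ring
    have := integrable_weighted hβpos hγ hμ0 hc hcs hb1 hb1'
    refine this.congr (ae_of_all _ fun p => ?_)
    ring
  have hInt2 : Integrable (fun p => (pdX u p + ρ * σ * pdY u p) * v p * Real.sign p.1
      * p.2 * hw β γ μ p)
      ((volume : Measure (ℝ × ℝ)).restrict ((Set.univ : Set ℝ) ×ˢ Set.Ioi (0:ℝ))) := by
    have hc : Continuous (fun p : ℝ × ℝ => (pdX u p + ρ * σ * pdY u p) * v p * p.2) :=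
      ((hcXu.add (continuous_const.mul hcYu)).mul hcv).mul continuous_snd
    have hcs : HasCompactSupport (fun p : ℝ × ℝ => (pdX u p + ρ * σ * pdY u p) * v p * p.2) := by
      apply hcs_triple hvcs hcsXv hcsYv
      intro p h1 h2 h3
      rw [h1]
      ring
    have := integrable_weighted hβpos hγ hμ0 hc hcs hbs hbs'
    refine this.congr (ae_of_all _ fun p => ?_)
    ring
  have hInt3 : Integrable (fun p => ((κ * ρ / σ - 1 / 2) * p.2 + (r - q - κ * θ * ρ / σ))
      * pdX u p * v p * hw β γ μ p)
      ((volume : Measure (ℝ × ℝ)).restrict ((Set.univ : Set ℝ) ×ˢ Set.Ioi (0:ℝ))) := by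
    have hc : Continuous (fun p : ℝ × ℝ => ((κ * ρ / σ - 1 / 2) * p.2
        + (r - q - κ * θ * ρ / σ)) * pdX u p * v p) :=
      (((continuous_const.mul continuous_snd).add continuous_const).mul hcXu).mul hcv
    have hcs : HasCompactSupport (fun p : ℝ × ℝ => ((κ * ρ / σ - 1 / 2) * p.2
        + (r - q - κ * θ * ρ / σ)) * pdX u p * v p) := hvcs.mul_left
    have := integrable_weighted hβpos hγ hμ0 hc hcs hb1 hb1'
    refine this.congr (ae_of_all _ fun p => ?_)
    ring
  have hInt4 : Integrable (fun p => u p * v p * hw β γ μ p)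
      ((volume : Measure (ℝ × ℝ)).restrict ((Set.univ : Set ℝ) ×ˢ Set.Ioi (0:ℝ))) := by
    have := integrable_weighted hβpos hγ hμ0 (hcu.mul hcv) hvcs.mul_left hb1 hb1'
    refine this.congr (ae_of_all _ fun p => ?_)
    simp only [Pi.mul_apply]
    ring
  have hIntD1 : Integrable (fun p => (C1x p - γ * Real.sign p.1 * C1 p) * hw β γ μ p)
      ((volume : Measure (ℝ × ℝ)).restrict ((Set.univ : Set ℝ) ×ˢ Set.Ioi (0:ℝ))) := by
    have ha := integrable_weighted hβpos hγ hμ0 hcC1x hcsC1x hb1 hb1'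
    have hb := integrable_weighted hβpos hγ hμ0 (continuous_const.mul hcC1)
      (hcsC1.mul_left : HasCompactSupport (fun p => γ * C1 p)) hbs hbs'
    refine (ha.sub hb).congr (ae_of_all _ fun p => ?_)
    simp only [Pi.sub_apply, Pi.mul_apply]
    ring
  have hIntD2 : Integrable (fun p => (C2y p * p.2 + C2 p * (β - μ * p.2)) * hw β γ μ p)
      ((volume : Measure (ℝ × ℝ)).restrict ((Set.univ : Set ℝ) ×ˢ Set.Ioi (0:ℝ))) := by
    have hc : Continuous (fun p : ℝ × ℝ => C2y p * p.2 + C2 p * (β - μ * p.2)) :=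
      (hcC2y.mul continuous_snd).add (hcC2.mul (continuous_const.sub
        (continuous_const.mul continuous_snd)))
    have hcs : HasCompactSupport (fun p : ℝ × ℝ => C2y p * p.2 + C2 p * (β - μ * p.2)) := by
      apply hcs_triple hcsC2 hcsC2y hcsC2y
      intro p h1 h2 h3
      rw [h1, h2]
      ring
    have := integrable_weighted hβpos hγ hμ0 hc hcs hb1 hb1'
    refine this.congr (ae_of_all _ fun p => ?_)
    ring
  -- vanishing of the divergence terms
  have hZ1 := integral_divX_zero hγ C1 C1x hd1 hcC1x hcsC1 hIntD1
  have hZ2 := integral_divY_zero hβpos hμ0 C2 C2y hd2 hcC2y hcsC2 hIntD2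
  -- the pointwise algebraic identity
  have hkey : ∀ p : ℝ × ℝ, hestonOp σ ρ κ θ r q u p * v p * hw β γ μ p
      - (1 / 2 * ((pdX u p * pdX v p + ρ * σ * pdY u p * pdX v p
            + ρ * σ * pdX u p * pdY v p + σ ^ 2 * pdY u p * pdY v p) * p.2 * hw β γ μ p)
        - γ / 2 * ((pdX u p + ρ * σ * pdY u p) * v p * Real.sign p.1 * p.2 * hw β γ μ p)
        - ((κ * ρ / σ - 1 / 2) * p.2 + (r - q - κ * θ * ρ / σ)) * pdX u p * v p * hw β γ μ p
        + r * (u p * v p * hw β γ μ p))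
      = (C1x p - γ * Real.sign p.1 * C1 p) * hw β γ μ p
        + (C2y p * p.2 + C2 p * (β - μ * p.2)) * hw β γ μ p := by
    intro p
    simp only [hC1, hC1x, hC2, hC2y, hestonOp]
    rw [pdXY_symm hu p, hβdef, hμdef]
    field_simp
    ring
  -- put everything together
  have hIntCombo : Integrable (fun p => 1 / 2 * ((pdX u p * pdX v p
        + ρ * σ * pdY u p * pdX v p + ρ * σ * pdX u p * pdY v p
        + σ ^ 2 * pdY u p * pdY v p) * p.2 * hw β γ μ p)
      - γ / 2 * ((pdX u p + ρ * σ * pdY u p) * v p * Real.sign p.1 * p.2 * hw β γ μ p)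
      - ((κ * ρ / σ - 1 / 2) * p.2 + (r - q - κ * θ * ρ / σ)) * pdX u p * v p * hw β γ μ p
      + r * (u p * v p * hw β γ μ p))
      ((volume : Measure (ℝ × ℝ)).restrict ((Set.univ : Set ℝ) ×ˢ Set.Ioi (0:ℝ))) :=
    (((hInt1.const_mul (1 / 2)).sub (hInt2.const_mul (γ / 2))).sub hInt3).add
      (hInt4.const_mul r)
  have hEq0 : (∫ p in (Set.univ : Set ℝ) ×ˢ Set.Ioi (0:ℝ),
      (hestonOp σ ρ κ θ r q u p * v p * hw β γ μ p
      - (1 / 2 * ((pdX u p * pdX v p + ρ * σ * pdY u p * pdX v p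
            + ρ * σ * pdX u p * pdY v p + σ ^ 2 * pdY u p * pdY v p) * p.2 * hw β γ μ p)
        - γ / 2 * ((pdX u p + ρ * σ * pdY u p) * v p * Real.sign p.1 * p.2 * hw β γ μ p)
        - ((κ * ρ / σ - 1 / 2) * p.2 + (r - q - κ * θ * ρ / σ)) * pdX u p * v p * hw β γ μ p
        + r * (u p * v p * hw β γ μ p)))) = 0 := by
    rw [integral_congr_ae (ae_of_all _ hkey), integral_add hIntD1 hIntD2, hZ1, hZ2]
    ring
  have hIA : Integrable (fun p => 1 / 2 * ((pdX u p * pdX v p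
        + ρ * σ * pdY u p * pdX v p + ρ * σ * pdX u p * pdY v p
        + σ ^ 2 * pdY u p * pdY v p) * p.2 * hw β γ μ p))
      ((volume : Measure (ℝ × ℝ)).restrict ((Set.univ : Set ℝ) ×ˢ Set.Ioi (0:ℝ))) :=
    hInt1.const_mul (1 / 2)
  have hIB : Integrable (fun p => γ / 2 * ((pdX u p + ρ * σ * pdY u p) * v p
        * Real.sign p.1 * p.2 * hw β γ μ p))
      ((volume : Measure (ℝ × ℝ)).restrict ((Set.univ : Set ℝ) ×ˢ Set.Ioi (0:ℝ))) :=
    hInt2.const_mul (γ / 2)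
  have hIAB : Integrable (fun p => 1 / 2 * ((pdX u p * pdX v p
        + ρ * σ * pdY u p * pdX v p + ρ * σ * pdX u p * pdY v p
        + σ ^ 2 * pdY u p * pdY v p) * p.2 * hw β γ μ p)
      - γ / 2 * ((pdX u p + ρ * σ * pdY u p) * v p * Real.sign p.1 * p.2 * hw β γ μ p))
      ((volume : Measure (ℝ × ℝ)).restrict ((Set.univ : Set ℝ) ×ˢ Set.Ioi (0:ℝ))) :=
    hIA.sub hIB
  have hIABC : Integrable (fun p => 1 / 2 * ((pdX u p * pdX v p
        + ρ * σ * pdY u p * pdX v p + ρ * σ * pdX u p * pdY v p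
        + σ ^ 2 * pdY u p * pdY v p) * p.2 * hw β γ μ p)
      - γ / 2 * ((pdX u p + ρ * σ * pdY u p) * v p * Real.sign p.1 * p.2 * hw β γ μ p)
      - ((κ * ρ / σ - 1 / 2) * p.2 + (r - q - κ * θ * ρ / σ)) * pdX u p * v p * hw β γ μ p)
      ((volume : Measure (ℝ × ℝ)).restrict ((Set.univ : Set ℝ) ×ˢ Set.Ioi (0:ℝ))) :=
    hIAB.sub hInt3
  have hIR : Integrable (fun p => r * (u p * v p * hw β γ μ p))
      ((volume : Measure (ℝ × ℝ)).restrict ((Set.univ : Set ℝ) ×ˢ Set.Ioi (0:ℝ))) :=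
    hInt4.const_mul r
  rw [integral_sub hInt0 hIntCombo, integral_add hIABC hIR, integral_sub hIAB hInt3,
    integral_sub hIA hIB, MeasureTheory.integral_const_mul, MeasureTheory.integral_const_mul, MeasureTheory.integral_const_mul] at hEq0
  linarith [hEq0]
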